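/- arXiv:1904.03623 — 2 statements merged into one kernel-verified Lean document; each statement's English description precedes it below -/
import Mathlib

section
/- Let (X, μ) be a finite measure space and u1, u2 : X → ℝ measurable functions. Define the kinetic functions ρ_i(z, ξ) := indicator of {u_i(z) > ξ} for i = 1, 2, and set ρ := (ρ1 + ρ2)/2. Then for every z ∈ X, ∫_ℝ (ρ(z,ξ) − ρ(z,ξ)²) dξ = (1/4)|u1(z) − u2(z)|. -/
open MeasureTheory

/-- for `ρ = (ρ₁ + ρ₂)/2` with `ρᵢ(z,ξ) = 𝟙_{uᵢ(z) > ξ}`,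
`∫_ℝ (ρ - ρ²) dξ = |u₁(z) - u₂(z)|/4` for every `z`. -/
theorem kinetic_average_defect
    {X : Type*} [MeasurableSpace X] (μ : Measure X) [IsFiniteMeasure μ]
    (u₁ u₂ : X → ℝ) (hu₁ : Measurable u₁) (hu₂ : Measurable u₂)
    (ρ₁ ρ₂ ρ : X → ℝ → ℝ)
    (hρ₁ : ∀ z ξ, ρ₁ z ξ = if ξ < u₁ z then 1 else 0)
    (hρ₂ : ∀ z ξ, ρ₂ z ξ = if ξ < u₂ z then 1 else 0)
    (hρ : ∀ z ξ, ρ z ξ = (ρ₁ z ξ + ρ₂ z ξ) / 2) :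
    ∀ z : X, (∫ ξ : ℝ, (ρ z ξ - (ρ z ξ) ^ 2)) = (1 / 4) * |u₁ z - u₂ z| := by
  intro z
  set a := u₁ z with ha
  set b := u₂ z with hb
  have hfun : (fun ξ : ℝ => ρ z ξ - (ρ z ξ) ^ 2)
      = Set.indicator (Set.Ico (min a b) (max a b)) (fun _ => (1/4 : ℝ)) := by
    funext ξ
    rw [hρ, hρ₁, hρ₂]
    rcases lt_or_ge ξ a with h1 | h1 <;> rcases lt_or_ge ξ b with h2 | h2
    · rw [if_pos h1, if_pos h2,
        Set.indicator_of_notMem (fun h => absurd h.1 (not_le.2 (lt_min h1 h2)))]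
      norm_num
    · rw [if_pos h1, if_neg (not_lt.2 h2),
        Set.indicator_of_mem (Set.mem_Ico.mpr ⟨(min_le_right a b).trans h2, lt_max_iff.2 (Or.inl h1)⟩)]
      norm_num
    · rw [if_neg (not_lt.2 h1), if_pos h2,
        Set.indicator_of_mem (Set.mem_Ico.mpr ⟨(min_le_left a b).trans h1, lt_max_iff.2 (Or.inr h2)⟩)]
      norm_num
    · rw [if_neg (not_lt.2 h1), if_neg (not_lt.2 h2),
        Set.indicator_of_notMem (fun h => absurd h.2 (not_lt.2 (max_le h1 h2)))]
      norm_num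
  rw [hfun, integral_indicator_const _ measurableSet_Ico]
  rw [measureReal_def, Real.volume_Ico]
  rcases le_total a b with h | h
  · rw [min_eq_left h, max_eq_right h, ENNReal.toReal_ofReal (by linarith), abs_sub_comm]
    rw [abs_of_nonneg (by linarith : (0:ℝ) ≤ b - a)]
    simp; ring
  · rw [min_eq_right h, max_eq_left h, ENNReal.toReal_ofReal (by linarith)]
    rw [abs_of_nonneg (by linarith : (0:ℝ) ≤ a - b)]
    simp; ring
end

section
/- Fix p > 2, m ∈ ℕ, and define S_m : ℝ → ℝ by S_m(ξ) = |ξ|^p for |ξ| ≤ m, and S_m(ξ) = m^{p−2}·[ (p(p−1)/2)ξ² − p(p−2)m|ξ| + ((p−1)(p−2)/2)m² ] for |ξ| > m. Then S_m is C², and for all ξ ∈ ℝ: (i) |ξ S_m'(ξ)| ≤ p S_m(ξ); (ii) |S_m'(ξ)| ≤ p(1 + S_m(ξ)); (iii) |S_m'(ξ)| ≤ |ξ| S_m''(ξ); (iv) ξ² S_m''(ξ) ≤ p(p−1) S_m(ξ); (v) S_m''(ξ) ≤ p(p−1)(1 + S_m(ξ)). -/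
set_option maxHeartbeats 1000000

open Real Filter

noncomputable def trcl (M ξ : ℝ) : ℝ := max (-M) (min ξ M)
noncomputable def trD1 (p M ξ : ℝ) : ℝ :=
  p * |trcl M ξ| ^ (p - 2) * trcl M ξ + p * (p - 1) * M ^ (p - 2) * (ξ - trcl M ξ)
noncomputable def trD2 (p M ξ : ℝ) : ℝ := p * (p - 1) * |trcl M ξ| ^ (p - 2)
noncomputable def trS (p M ξ : ℝ) : ℝ :=
  if |ξ| ≤ M then |ξ| ^ p
  else M ^ (p - 2) *
    ((p * (p - 1) / 2) * ξ ^ 2 - p * (p - 2) * M * |ξ| + ((p - 1) * (p - 2) / 2) * M ^ 2)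

lemma trcl_of_abs_le {M ξ : ℝ} (h : |ξ| ≤ M) : trcl M ξ = ξ := by
  obtain ⟨h1, h2⟩ := abs_le.1 h
  simp [trcl, min_eq_left h2, max_eq_right h1]

lemma trcl_of_ge {M ξ : ℝ} (hM : 0 ≤ M) (h : M ≤ ξ) : trcl M ξ = M := by
  simp [trcl, min_eq_right h, max_eq_right (by linarith : -M ≤ M)]

lemma trcl_neg {M : ℝ} (hM : 0 ≤ M) (ξ : ℝ) : trcl M (-ξ) = - trcl M ξ := by
  unfold trcl
  rcases le_total ξ (-M) with h | h
  · rw [min_eq_right (by linarith : M ≤ -ξ), min_eq_left (by linarith : ξ ≤ M),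
      max_eq_right (by linarith : -M ≤ M), max_eq_left h, neg_neg]
  · rcases le_total ξ M with h' | h'
    · rw [min_eq_left (by linarith : -ξ ≤ M), max_eq_right (by linarith : -M ≤ -ξ),
        min_eq_left h', max_eq_right h]
    · rw [min_eq_left (by linarith : -ξ ≤ M), max_eq_left (by linarith : -ξ ≤ -M),
        min_eq_right h', max_eq_right (by linarith : -M ≤ M)]

lemma trS_neg (p M ξ : ℝ) : trS p M (-ξ) = trS p M ξ := by simp [trS, neg_sq]

lemma trD1_neg {p M : ℝ} (hM : 0 ≤ M) (ξ : ℝ) : trD1 p M (-ξ) = - trD1 p M ξ := by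
  simp only [trD1, trcl_neg hM, abs_neg]; ring

lemma trD2_neg {p M : ℝ} (hM : 0 ≤ M) (ξ : ℝ) : trD2 p M (-ξ) = trD2 p M ξ := by
  simp only [trD2, trcl_neg hM, abs_neg]

/-- derivative of `|x|^p` everywhere. -/
lemma tr_hasDerivAt_abs_rpow {p : ℝ} (hp : 2 < p) (y : ℝ) :
    HasDerivAt (fun x : ℝ => |x| ^ p) (p * |y| ^ (p - 2) * y) y := by
  apply hasDerivAt_of_hasDerivAt_of_ne' (x := 0) (g := fun z : ℝ => p * |z| ^ (p - 2) * z)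
  · intro y hy
    rcases hy.lt_or_gt with h | h
    · have : HasDerivAt (fun x : ℝ => (-x) ^ p) (p * (-y) ^ (p - 1) * (-1)) y :=
        (Real.hasDerivAt_rpow_const (p := p) (Or.inl (by linarith))).comp y (hasDerivAt_neg y)
      have h2 : (fun x : ℝ => (-x) ^ p) =ᶠ[nhds y] fun x => |x| ^ p := by
        filter_upwards [Iio_mem_nhds h] with x hx
        rw [abs_of_neg hx]
      have h3 := h2.symm.hasDerivAt_iff.2 this
      convert h3 using 1
      rw [abs_of_neg h, show p - 1 = (p - 2) + 1 by ring,
        Real.rpow_add_one (by linarith : (-y) ≠ 0)]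
      ring
    · have : HasDerivAt (fun x : ℝ => x ^ p) (p * y ^ (p - 1)) y :=
        Real.hasDerivAt_rpow_const (Or.inl (ne_of_gt h))
      have h2 : (fun x : ℝ => x ^ p) =ᶠ[nhds y] fun x => |x| ^ p := by
        filter_upwards [Ioi_mem_nhds h] with x hx
        rw [abs_of_pos hx]
      have h3 := h2.symm.hasDerivAt_iff.2 this
      convert h3 using 1
      rw [abs_of_pos h, show p - 1 = (p - 2) + 1 by ring,
        Real.rpow_add_one (ne_of_gt h)]
      ring
  · exact (continuous_abs.rpow_const fun _ => Or.inr (by linarith)).continuousAt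
  · exact (continuousAt_const.mul
      (continuous_abs.continuousAt.rpow_const (Or.inr (by linarith)))).mul continuousAt_id

/-- derivative of `p|x|^(p-2)x` everywhere. -/
lemma tr_hasDerivAt_abs_rpow_mul {p : ℝ} (hp : 2 < p) (y : ℝ) :
    HasDerivAt (fun x : ℝ => p * |x| ^ (p - 2) * x) (p * (p - 1) * |y| ^ (p - 2)) y := by
  apply hasDerivAt_of_hasDerivAt_of_ne' (x := 0)
    (g := fun z : ℝ => p * (p - 1) * |z| ^ (p - 2))
  · intro y hy
    rcases hy.lt_or_gt with h | h
    · have h1 : HasDerivAt (fun x : ℝ => (-x) ^ (p - 1)) ((p - 1) * (-y) ^ (p - 2) * (-1)) y := by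
        have := (Real.hasDerivAt_rpow_const (x := -y) (p := p - 1)
          (Or.inl (by linarith))).comp y (hasDerivAt_neg y)
        refine this.congr_deriv ?_; ring_nf
      have h2 : HasDerivAt (fun x : ℝ => p * -((-x) ^ (p - 1)))
          (p * (p - 1) * (-y) ^ (p - 2)) y := by
        have := (h1.neg).const_mul p
        refine this.congr_deriv ?_; ring
      have h3 : (fun x : ℝ => p * -((-x) ^ (p - 1))) =ᶠ[nhds y]
          fun x => p * |x| ^ (p - 2) * x := by
        filter_upwards [Iio_mem_nhds h] with x hx
        simp only [Set.mem_Iio] at hx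
        rw [abs_of_neg hx, show p - 1 = (p - 2) + 1 by ring,
          Real.rpow_add_one (by intro hc; linarith : (-x) ≠ 0)]
        ring
      have := h3.symm.hasDerivAt_iff.2 h2
      rwa [abs_of_neg h]
    · have h1 : HasDerivAt (fun x : ℝ => p * x ^ (p - 1)) (p * ((p - 1) * y ^ (p - 2))) y := by
        have := (Real.hasDerivAt_rpow_const (x := y) (p := p - 1)
          (Or.inl (ne_of_gt h))).const_mul p
        rwa [show p - 1 - 1 = p - 2 by ring] at this
      have h3 : (fun x : ℝ => p * x ^ (p - 1)) =ᶠ[nhds y] fun x => p * |x| ^ (p - 2) * x := by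
        filter_upwards [Ioi_mem_nhds h] with x hx
        rw [abs_of_pos hx, show p - 1 = (p - 2) + 1 by ring, Real.rpow_add_one (ne_of_gt hx)]
        ring
      have := h3.symm.hasDerivAt_iff.2 h1
      rw [abs_of_pos h]
      convert this using 1; ring
  · exact ((continuousAt_const.mul
      (continuous_abs.continuousAt.rpow_const (Or.inr (by linarith)))).mul continuousAt_id)
  · exact continuousAt_const.mul
      (continuous_abs.continuousAt.rpow_const (Or.inr (by linarith)))

lemma tr_hasDerivAt_quad (a b c x : ℝ) :
    HasDerivAt (fun t : ℝ => a * t ^ 2 + b * t + c) (2 * a * x + b) x := by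
  have h := (((hasDerivAt_pow 2 x).const_mul a).add ((hasDerivAt_id x).const_mul b)).add_const c
  refine h.congr_deriv ?_
  simp; ring

lemma tr_rpow_sub_two_mul_sq {M p : ℝ} (hM : 0 < M) : M ^ (p - 2) * M ^ 2 = M ^ p := by
  rw [← Real.rpow_natCast M 2, ← Real.rpow_add hM]
  norm_num

lemma tr_rpow_sub_two_mul {M p : ℝ} (hM : M ≠ 0) : M ^ (p - 2) * M = M ^ (p - 1) := by
  rw [show p - 1 = p - 2 + 1 by ring, Real.rpow_add_one hM]

lemma tr_hasDerivAt_S {p M : ℝ} (hp : 2 < p) (hM : 1 ≤ M) {ξ : ℝ} (hξ : 0 ≤ ξ) :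
    HasDerivAt (trS p M) (trD1 p M ξ) ξ := by
  have hM0 : (0:ℝ) < M := by linarith
  rcases lt_trichotomy ξ M with hlt | heq | hgt
  · have habs : |ξ| < M := by rwa [abs_of_nonneg hξ]
    have hev : (fun x : ℝ => |x| ^ p) =ᶠ[nhds ξ] trS p M := by
      filter_upwards [(isOpen_lt continuous_abs continuous_const).mem_nhds habs] with x hx
      rw [trS, if_pos (le_of_lt hx)]
    have hval : trD1 p M ξ = p * |ξ| ^ (p - 2) * ξ := by
      rw [trD1, trcl_of_abs_le habs.le]; ring
    rw [hval]
    exact hev.hasDerivAt_iff.1 (tr_hasDerivAt_abs_rpow hp ξ)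
  · rw [heq]
    have hbd : (M:ℝ) ^ p = M ^ (p - 2) *
        ((p * (p - 1) / 2) * M ^ 2 - p * (p - 2) * M * M + ((p - 1) * (p - 2) / 2) * M ^ 2) := by
      linear_combination (-(p * (p-1)/2) + p*(p-2) - (p-1)*(p-2)/2) * tr_rpow_sub_two_mul_sq (p := p) hM0
    have hfm : HasDerivAt
        (fun x : ℝ => if x ≤ M then x ^ p else M ^ (p - 2) *
          ((p * (p - 1) / 2) * x ^ 2 - p * (p - 2) * M * x + ((p - 1) * (p - 2) / 2) * M ^ 2))
        ((fun y : ℝ => if y ≤ M then p * y ^ (p - 1)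
          else M ^ (p - 2) * (p * (p - 1) * y - p * (p - 2) * M)) M) M := by
      refine hasDerivAt_of_hasDerivAt_of_ne (g := fun y : ℝ => if y ≤ M then p * y ^ (p - 1)
        else M ^ (p - 2) * (p * (p - 1) * y - p * (p - 2) * M)) ?_ ?_ ?_
      · intro y hy
        rcases hy.lt_or_gt with h | h
        · have hev2 : (fun x : ℝ => x ^ p) =ᶠ[nhds y] (fun x : ℝ => if x ≤ M then x ^ p
              else M ^ (p - 2) * ((p * (p - 1) / 2) * x ^ 2 - p * (p - 2) * M * x
                + ((p - 1) * (p - 2) / 2) * M ^ 2)) := by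
            filter_upwards [Iio_mem_nhds h] with x hx
            rw [if_pos (le_of_lt hx)]
          beta_reduce
          rw [if_pos h.le]
          exact hev2.hasDerivAt_iff.1 (Real.hasDerivAt_rpow_const (Or.inr (by linarith)))
        · have hev2 : (fun x : ℝ => (M ^ (p - 2) * (p * (p - 1) / 2)) * x ^ 2 +
              (-(M ^ (p - 2) * (p * (p - 2) * M))) * x
              + M ^ (p - 2) * (((p - 1) * (p - 2) / 2) * M ^ 2)) =ᶠ[nhds y]
              (fun x : ℝ => if x ≤ M then x ^ p
              else M ^ (p - 2) * ((p * (p - 1) / 2) * x ^ 2 - p * (p - 2) * M * x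
                + ((p - 1) * (p - 2) / 2) * M ^ 2)) := by
            filter_upwards [Ioi_mem_nhds h] with x hx
            rw [if_neg (not_le.2 hx)]
            ring
          beta_reduce
          rw [if_neg (not_le.2 h)]
          have := hev2.hasDerivAt_iff.1 (tr_hasDerivAt_quad _ _ _ y)
          convert this using 1
          ring
      · apply Continuous.continuousAt
        apply Continuous.if_le (Real.continuous_rpow_const (by linarith)) (by fun_prop)
          continuous_id continuous_const
        intro x hx
        simp only [id_eq] at hx
        subst hx
        exact hbd
      · apply Continuous.continuousAt
        apply Continuous.if_le (continuous_const.mul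
            (Real.continuous_rpow_const (by linarith : (0:ℝ) ≤ p - 1)))
          (by fun_prop) continuous_id continuous_const
        intro x hx
        simp only [id_eq] at hx
        subst hx
        simp only [Pi.mul_apply]
        rw [← tr_rpow_sub_two_mul hM0.ne']
        ring
    have hev : (fun x : ℝ => if x ≤ M then x ^ p else M ^ (p - 2) *
          ((p * (p - 1) / 2) * x ^ 2 - p * (p - 2) * M * x + ((p - 1) * (p - 2) / 2) * M ^ 2))
        =ᶠ[nhds M] trS p M := by
      filter_upwards [Ioi_mem_nhds hM0] with x hx
      simp only [trS, abs_of_pos (Set.mem_Ioi.1 hx)]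
    have hval : trD1 p M M = if (M:ℝ) ≤ M then p * M ^ (p - 1)
        else M ^ (p - 2) * (p * (p - 1) * M - p * (p - 2) * M) := by
      rw [if_pos le_rfl, trD1, trcl_of_ge hM0.le le_rfl, abs_of_pos hM0,
        ← tr_rpow_sub_two_mul hM0.ne']
      ring
    rw [hval]
    exact hev.hasDerivAt_iff.1 hfm
  · have hev : (fun x : ℝ => (M ^ (p - 2) * (p * (p - 1) / 2)) * x ^ 2 +
        (-(M ^ (p - 2) * (p * (p - 2) * M))) * x
        + M ^ (p - 2) * (((p - 1) * (p - 2) / 2) * M ^ 2)) =ᶠ[nhds ξ] trS p M := by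
      filter_upwards [Ioi_mem_nhds hgt] with x hx
      have hx0 : (0:ℝ) < x := lt_trans hM0 hx
      rw [trS, if_neg (by rw [abs_of_pos hx0]; exact not_le.2 hx), abs_of_pos hx0]
      ring
    have hval : trD1 p M ξ = 2 * (M ^ (p - 2) * (p * (p - 1) / 2)) * ξ +
        (-(M ^ (p - 2) * (p * (p - 2) * M))) := by
      rw [trD1, trcl_of_ge hM0.le hgt.le, abs_of_pos hM0]
      ring
    rw [hval]
    exact hev.hasDerivAt_iff.1 (tr_hasDerivAt_quad _ _ _ ξ)

lemma tr_hasDerivAt_affine (a b x : ℝ) : HasDerivAt (fun t : ℝ => a * t + b) a x := by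
  simpa using ((hasDerivAt_id x).const_mul a).add_const b

lemma tr_hasDerivAt_D1 {p M : ℝ} (hp : 2 < p) (hM : 1 ≤ M) {ξ : ℝ} (hξ : 0 ≤ ξ) :
    HasDerivAt (trD1 p M) (trD2 p M ξ) ξ := by
  have hM0 : (0:ℝ) < M := by linarith
  rcases lt_trichotomy ξ M with hlt | heq | hgt
  · have habs : |ξ| < M := by rwa [abs_of_nonneg hξ]
    have hev : (fun x : ℝ => p * |x| ^ (p - 2) * x) =ᶠ[nhds ξ] trD1 p M := by
      filter_upwards [(isOpen_lt continuous_abs continuous_const).mem_nhds habs] with x hx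
      rw [trD1, trcl_of_abs_le hx.le]
      ring
    have hval : trD2 p M ξ = p * (p - 1) * |ξ| ^ (p - 2) := by
      rw [trD2, trcl_of_abs_le habs.le]
    rw [hval]
    exact hev.hasDerivAt_iff.1 (tr_hasDerivAt_abs_rpow_mul hp ξ)
  · rw [heq]
    have hfm : HasDerivAt
        (fun x : ℝ => if x ≤ M then p * x ^ (p - 1)
          else p * M ^ (p - 2) * M + p * (p - 1) * M ^ (p - 2) * (x - M))
        ((fun y : ℝ => if y ≤ M then p * ((p - 1) * y ^ (p - 2))
          else p * (p - 1) * M ^ (p - 2)) M) M := by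
      refine hasDerivAt_of_hasDerivAt_of_ne (g := fun y : ℝ => if y ≤ M then
        p * ((p - 1) * y ^ (p - 2)) else p * (p - 1) * M ^ (p - 2)) ?_ ?_ ?_
      · intro y hy
        rcases hy.lt_or_gt with h | h
        · have hev2 : (fun x : ℝ => p * x ^ (p - 1)) =ᶠ[nhds y]
              (fun x : ℝ => if x ≤ M then p * x ^ (p - 1)
                else p * M ^ (p - 2) * M + p * (p - 1) * M ^ (p - 2) * (x - M)) := by
            filter_upwards [Iio_mem_nhds h] with x hx
            rw [if_pos (le_of_lt hx)]
          beta_reduce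
          rw [if_pos h.le]
          have := (Real.hasDerivAt_rpow_const (x := y) (p := p - 1)
            (Or.inr (by linarith))).const_mul p
          rw [show p - 1 - 1 = p - 2 by ring] at this
          exact hev2.hasDerivAt_iff.1 this
        · have hev2 : (fun x : ℝ => (p * (p - 1) * M ^ (p - 2)) * x +
              (p * M ^ (p - 2) * M - p * (p - 1) * M ^ (p - 2) * M)) =ᶠ[nhds y]
              (fun x : ℝ => if x ≤ M then p * x ^ (p - 1)
                else p * M ^ (p - 2) * M + p * (p - 1) * M ^ (p - 2) * (x - M)) := by
            filter_upwards [Ioi_mem_nhds h] with x hx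
            rw [if_neg (not_le.2 hx)]
            ring
          beta_reduce
          rw [if_neg (not_le.2 h)]
          exact hev2.hasDerivAt_iff.1 (tr_hasDerivAt_affine _ _ y)
      · apply Continuous.continuousAt
        apply Continuous.if_le (continuous_const.mul
            (Real.continuous_rpow_const (by linarith : (0:ℝ) ≤ p - 1)))
          (by fun_prop) continuous_id continuous_const
        intro x hx
        simp only [id_eq] at hx
        subst hx
        simp only [Pi.mul_apply]
        rw [← tr_rpow_sub_two_mul hM0.ne']
        ring
      · apply Continuous.continuousAt
        apply Continuous.if_le (continuous_const.mul (continuous_const.mul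
            (Real.continuous_rpow_const (by linarith : (0:ℝ) ≤ p - 2))))
          continuous_const continuous_id continuous_const
        intro x hx
        simp only [id_eq] at hx
        subst hx
        simp only [Pi.mul_apply]
        ring
    have hev : (fun x : ℝ => if x ≤ M then p * x ^ (p - 1)
          else p * M ^ (p - 2) * M + p * (p - 1) * M ^ (p - 2) * (x - M))
        =ᶠ[nhds M] trD1 p M := by
      filter_upwards [Ioi_mem_nhds hM0] with x hx
      simp only [Set.mem_Ioi] at hx
      rcases le_or_gt x M with hxM | hxM
      · rw [if_pos hxM, trD1, trcl_of_abs_le (by rwa [abs_of_pos hx]), abs_of_pos hx,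
          sub_self, mul_zero, add_zero, mul_assoc, tr_rpow_sub_two_mul (ne_of_gt hx)]
      · rw [if_neg (not_le.2 hxM), trD1, trcl_of_ge hM0.le hxM.le, abs_of_pos hM0]
    have hval : trD2 p M M = if (M:ℝ) ≤ M then p * ((p - 1) * M ^ (p - 2))
        else p * (p - 1) * M ^ (p - 2) := by
      rw [if_pos le_rfl, trD2, trcl_of_ge hM0.le le_rfl, abs_of_pos hM0]
      ring
    rw [hval]
    exact hev.hasDerivAt_iff.1 hfm
  · have hev : (fun x : ℝ => (p * (p - 1) * M ^ (p - 2)) * x +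
        (p * M ^ (p - 2) * M - p * (p - 1) * M ^ (p - 2) * M)) =ᶠ[nhds ξ] trD1 p M := by
      filter_upwards [Ioi_mem_nhds hgt] with x hx
      rw [trD1, trcl_of_ge hM0.le hx.le, abs_of_pos hM0]
      ring
    have hval : trD2 p M ξ = p * (p - 1) * M ^ (p - 2) := by
      rw [trD2, trcl_of_ge hM0.le hgt.le, abs_of_pos hM0]
    rw [hval]
    exact hev.hasDerivAt_iff.1 (tr_hasDerivAt_affine _ _ ξ)

lemma tr_hasDerivAt_S' {p M : ℝ} (hp : 2 < p) (hM : 1 ≤ M) (ξ : ℝ) :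
    HasDerivAt (trS p M) (trD1 p M ξ) ξ := by
  have hM0 : (0:ℝ) ≤ M := by linarith
  rcases le_total 0 ξ with hξ | hξ
  · exact tr_hasDerivAt_S hp hM hξ
  · have h := (tr_hasDerivAt_S hp hM (ξ := -ξ) (by linarith)).comp ξ (hasDerivAt_neg ξ)
    have heq : (trS p M ∘ fun x : ℝ => -x) = trS p M := funext fun x => trS_neg p M x
    rw [heq, trD1_neg hM0] at h
    simpa using h

lemma tr_hasDerivAt_D1' {p M : ℝ} (hp : 2 < p) (hM : 1 ≤ M) (ξ : ℝ) :
    HasDerivAt (trD1 p M) (trD2 p M ξ) ξ := by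
  have hM0 : (0:ℝ) ≤ M := by linarith
  rcases le_total 0 ξ with hξ | hξ
  · exact tr_hasDerivAt_D1 hp hM hξ
  · have h := (tr_hasDerivAt_D1 hp hM (ξ := -ξ) (by linarith)).comp ξ (hasDerivAt_neg ξ)
    have heq : (trD1 p M ∘ fun x : ℝ => -x) = fun x => - trD1 p M x :=
      funext fun x => trD1_neg hM0 x
    rw [heq] at h
    have h2 := h.neg
    rw [trD2_neg hM0] at h2
    simpa [Pi.neg_def] using h2

lemma tr_continuous_D2 {p M : ℝ} (hp : 2 < p) : Continuous (trD2 p M) := by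
  have hc : Continuous fun ξ : ℝ => |trcl M ξ| := by unfold trcl; fun_prop
  exact continuous_const.mul
    ((Real.continuous_rpow_const (by linarith : (0:ℝ) ≤ p - 2)).comp hc)

lemma tr_ineqs {p M : ℝ} (hp : 2 < p) (hM : 1 ≤ M) {ξ : ℝ} (hξ : 0 ≤ ξ) :
    |ξ * trD1 p M ξ| ≤ p * trS p M ξ ∧
    |trD1 p M ξ| ≤ p * (1 + trS p M ξ) ∧
    |trD1 p M ξ| ≤ |ξ| * trD2 p M ξ ∧
    ξ ^ 2 * trD2 p M ξ ≤ p * (p - 1) * trS p M ξ ∧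
    trD2 p M ξ ≤ p * (p - 1) * (1 + trS p M ξ) := by
  have hM0 : (0:ℝ) < M := by linarith
  have h1 : (0:ℝ) < p := by linarith
  have h2 : (0:ℝ) < p - 1 := by linarith
  have h3 : (0:ℝ) < p - 2 := by linarith
  rcases le_or_gt ξ M with hle | hgt
  · -- inside the truncation region
    have habs : |ξ| = ξ := abs_of_nonneg hξ
    have habsle : |ξ| ≤ M := by rwa [habs]
    have hSv : trS p M ξ = ξ ^ p := by rw [trS, if_pos habsle, habs]
    have hD1v : trD1 p M ξ = p * ξ ^ (p - 2) * ξ := by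
      rw [trD1, trcl_of_abs_le habsle, habs]; ring
    have hD2v : trD2 p M ξ = p * (p - 1) * ξ ^ (p - 2) := by
      rw [trD2, trcl_of_abs_le habsle, habs]
    rcases eq_or_lt_of_le hξ with h0 | h0
    · -- ξ = 0
      rw [hSv, hD1v, hD2v, ← h0]
      rw [Real.zero_rpow (by linarith : p ≠ 0), Real.zero_rpow (by linarith : p - 2 ≠ 0)]
      norm_num
      exact ⟨h1.le, by nlinarith⟩
    · have key2 : ξ ^ (p - 2) * ξ = ξ ^ (p - 1) := tr_rpow_sub_two_mul (ne_of_gt h0)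
      have key3 : ξ ^ (p - 1) * ξ = ξ ^ p := by
        rw [show p = p - 1 + 1 by ring, Real.rpow_add_one (ne_of_gt h0)]
        ring_nf
      have hp2 : (0:ℝ) ≤ ξ ^ (p - 2) := Real.rpow_nonneg hξ _
      have hp1' : (0:ℝ) ≤ ξ ^ (p - 1) := Real.rpow_nonneg hξ _
      have hpp : (0:ℝ) ≤ ξ ^ p := Real.rpow_nonneg hξ _
      have hb1 : ξ ^ (p - 1) ≤ 1 + ξ ^ p := by
        rcases le_total ξ 1 with hx1 | hx1
        · have := Real.rpow_le_one hξ hx1 (by linarith : (0:ℝ) ≤ p - 1)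
          linarith
        · have := Real.rpow_le_rpow_of_exponent_le hx1 (by linarith : p - 1 ≤ p)
          linarith
      have hb2 : ξ ^ (p - 2) ≤ 1 + ξ ^ p := by
        rcases le_total ξ 1 with hx1 | hx1
        · have := Real.rpow_le_one hξ hx1 (by linarith : (0:ℝ) ≤ p - 2)
          linarith
        · have := Real.rpow_le_rpow_of_exponent_le hx1 (by linarith : p - 2 ≤ p)
          linarith
      refine ⟨?_, ?_, ?_, ?_, ?_⟩
      · rw [hSv, hD1v, abs_of_nonneg (by positivity)]
        have e : ξ * (p * ξ ^ (p - 2) * ξ) = p * ξ ^ p := by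
          linear_combination p * key3 + p * ξ * key2
        linarith [e.le]
      · rw [hSv, hD1v, abs_of_nonneg (by positivity)]
        have e : p * ξ ^ (p - 2) * ξ = p * ξ ^ (p - 1) := by linear_combination p * key2
        rw [e]
        nlinarith [hb1]
      · rw [hD1v, hD2v, habs, abs_of_nonneg (by positivity)]
        have hnn : (0:ℝ) ≤ p * (p - 2) * (ξ * ξ ^ (p - 2)) :=
          mul_nonneg (by nlinarith) (mul_nonneg hξ hp2)
        nlinarith [hnn]
      · rw [hSv, hD2v]
        have e : ξ ^ 2 * ξ ^ (p - 2) = ξ ^ p := by linear_combination ξ * key2 + key3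
        have e2 : ξ ^ 2 * (p * (p - 1) * ξ ^ (p - 2)) = p * (p - 1) * ξ ^ p := by
          linear_combination p * (p - 1) * e
        linarith [e2.le]
      · rw [hSv, hD2v]
        have hnn : (0:ℝ) ≤ p * (p - 1) * (1 + ξ ^ p - ξ ^ (p - 2)) :=
          mul_nonneg (by nlinarith) (by linarith)
        nlinarith [hnn]
  · -- outside the truncation region
    have hx0 : (0:ℝ) < ξ := lt_trans hM0 hgt
    have habs : |ξ| = ξ := abs_of_pos hx0
    have hSv : trS p M ξ = M ^ (p - 2) *
        ((p * (p - 1) / 2) * ξ ^ 2 - p * (p - 2) * M * ξ + ((p - 1) * (p - 2) / 2) * M ^ 2) := by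
      rw [trS, if_neg (by rw [habs]; exact not_le.2 hgt), habs]
    have hD1v : trD1 p M ξ = p * M ^ (p - 2) * M + p * (p - 1) * M ^ (p - 2) * (ξ - M) := by
      rw [trD1, trcl_of_ge hM0.le hgt.le, abs_of_pos hM0]
    have hD2v : trD2 p M ξ = p * (p - 1) * M ^ (p - 2) := by
      rw [trD2, trcl_of_ge hM0.le hgt.le, abs_of_pos hM0]
    set t : ℝ := M ^ (p - 2) with ht
    have ht1 : (1:ℝ) ≤ t := Real.one_le_rpow hM (by linarith)
    have ht0 : (0:ℝ) < t := by linarith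
    have hxM : (0:ℝ) ≤ ξ - M := by linarith
    have hx1 : (1:ℝ) ≤ ξ := by linarith
    have hx2 : (1:ℝ) ≤ ξ ^ 2 := by nlinarith [hx1]
    have hQ : ξ ^ 2 ≤ (p * (p - 1) / 2) * ξ ^ 2 - p * (p - 2) * M * ξ
        + ((p - 1) * (p - 2) / 2) * M ^ 2 := by
      have hin : (0:ℝ) ≤ (p + 1) * ξ - (p - 1) * M := by nlinarith
      have hpr : (0:ℝ) ≤ (p - 2) * ((ξ - M) * ((p + 1) * ξ - (p - 1) * M)) :=
        mul_nonneg h3.le (mul_nonneg hxM hin)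
      nlinarith [hpr]
    have hQ1 : (1:ℝ) ≤ (p * (p - 1) / 2) * ξ ^ 2 - p * (p - 2) * M * ξ
        + ((p - 1) * (p - 2) / 2) * M ^ 2 := le_trans hx2 hQ
    have hD1n : (0:ℝ) ≤ trD1 p M ξ := by
      rw [hD1v]
      nlinarith [mul_pos (mul_pos h1 ht0) hM0,
        mul_nonneg (mul_nonneg (mul_nonneg h1.le h2.le) ht0.le) hxM]
    have I1 : ξ * trD1 p M ξ ≤ p * trS p M ξ := by
      rw [hSv, hD1v]
      nlinarith [mul_nonneg (mul_nonneg (mul_nonneg (mul_nonneg h1.le h2.le) h3.le) ht0.le)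
        (sq_nonneg (ξ - M))]
    refine ⟨?_, ?_, ?_, ?_, ?_⟩
    · rw [abs_of_nonneg (mul_nonneg hx0.le hD1n)]
      exact I1
    · rw [abs_of_nonneg hD1n]
      have hS0 : (0:ℝ) ≤ trS p M ξ := by
        rw [hSv]
        nlinarith [mul_nonneg ht0.le (by linarith : (0:ℝ) ≤ (p * (p - 1) / 2) * ξ ^ 2
          - p * (p - 2) * M * ξ + ((p - 1) * (p - 2) / 2) * M ^ 2)]
      have hchain : trD1 p M ξ ≤ ξ * trD1 p M ξ := by
        nlinarith [mul_nonneg hD1n (by linarith : (0:ℝ) ≤ ξ - 1)]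
      nlinarith [I1, hS0, hchain]
    · rw [abs_of_nonneg hD1n, habs, hD1v, hD2v]
      nlinarith [mul_nonneg (mul_nonneg (mul_nonneg h1.le h3.le) ht0.le) hM0.le]
    · rw [hSv, hD2v]
      nlinarith [mul_nonneg (mul_nonneg (mul_nonneg h1.le h2.le) ht0.le)
        (by linarith [hQ] : (0:ℝ) ≤ ((p * (p - 1) / 2) * ξ ^ 2 - p * (p - 2) * M * ξ
          + ((p - 1) * (p - 2) / 2) * M ^ 2) - ξ ^ 2)]
    · rw [hSv, hD2v]
      have hq : (0:ℝ) ≤ 1 + t * ((p * (p - 1) / 2) * ξ ^ 2 - p * (p - 2) * M * ξ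
          + ((p - 1) * (p - 2) / 2) * M ^ 2) - t := by
        nlinarith [mul_nonneg ht0.le (by linarith : (0:ℝ) ≤ ((p * (p - 1) / 2) * ξ ^ 2
          - p * (p - 2) * M * ξ + ((p - 1) * (p - 2) / 2) * M ^ 2) - 1)]
      nlinarith [mul_nonneg (mul_nonneg h1.le h2.le) hq]



/-- the truncation `S_m` of `|ξ|^p` is `C²` and satisfies the five
elementary inequalities. Here `S' = deriv S` and `S'' = deriv (deriv S)`. -/
theorem truncation_Sm_properties
    (p : ℝ) (hp : 2 < p) (m : ℕ) (hm : 1 ≤ m)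
    (S : ℝ → ℝ)
    (hS : ∀ ξ : ℝ, S ξ =
      if |ξ| ≤ (m : ℝ) then |ξ| ^ p
      else (m : ℝ) ^ (p - 2) *
        ((p * (p - 1) / 2) * ξ ^ 2 - p * (p - 2) * m * |ξ|
          + ((p - 1) * (p - 2) / 2) * (m : ℝ) ^ 2)) :
    ContDiff ℝ 2 S ∧
    (∀ ξ : ℝ, |ξ * deriv S ξ| ≤ p * S ξ) ∧
    (∀ ξ : ℝ, |deriv S ξ| ≤ p * (1 + S ξ)) ∧
    (∀ ξ : ℝ, |deriv S ξ| ≤ |ξ| * deriv (deriv S) ξ) ∧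
    (∀ ξ : ℝ, ξ ^ 2 * deriv (deriv S) ξ ≤ p * (p - 1) * S ξ) ∧
    (∀ ξ : ℝ, deriv (deriv S) ξ ≤ p * (p - 1) * (1 + S ξ)) := by
  have hMR : (1:ℝ) ≤ (m:ℝ) := by exact_mod_cast hm
  have hM0 : (0:ℝ) ≤ (m:ℝ) := by linarith
  have hSeq : S = trS p (m:ℝ) := funext fun ξ => by rw [hS ξ]; rfl
  subst hSeq
  have hd1 : deriv (trS p (m:ℝ)) = trD1 p (m:ℝ) :=
    funext fun ξ => (tr_hasDerivAt_S' hp hMR ξ).deriv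
  have hd2 : deriv (trD1 p (m:ℝ)) = trD2 p (m:ℝ) :=
    funext fun ξ => (tr_hasDerivAt_D1' hp hMR ξ).deriv
  refine ⟨?_, ?_, ?_, ?_, ?_, ?_⟩
  · rw [show (2 : WithTop ℕ∞) = 1 + 1 by rfl]
    refine contDiff_succ_iff_deriv.2
      ⟨fun ξ => (tr_hasDerivAt_S' hp hMR ξ).differentiableAt, ?_, ?_⟩
    · intro h
      simp at h
    · rw [hd1]
      exact contDiff_one_iff_deriv.2
        ⟨fun ξ => (tr_hasDerivAt_D1' hp hMR ξ).differentiableAt,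
          by rw [hd2]; exact tr_continuous_D2 hp⟩
  · intro ξ
    rw [hd1]
    rcases le_total 0 ξ with h | h
    · exact (tr_ineqs hp hMR h).1
    · have := (tr_ineqs hp hMR (neg_nonneg.2 h)).1
      rw [trD1_neg hM0, trS_neg] at this
      simpa using this
  · intro ξ
    rw [hd1]
    rcases le_total 0 ξ with h | h
    · exact (tr_ineqs hp hMR h).2.1
    · have := (tr_ineqs hp hMR (neg_nonneg.2 h)).2.1
      rw [trD1_neg hM0, trS_neg] at this
      simpa using this
  · intro ξ
    rw [hd1, hd2]
    rcases le_total 0 ξ with h | h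
    · exact (tr_ineqs hp hMR h).2.2.1
    · have := (tr_ineqs hp hMR (neg_nonneg.2 h)).2.2.1
      rw [trD1_neg hM0, trD2_neg hM0] at this
      simpa using this
  · intro ξ
    rw [hd1, hd2]
    rcases le_total 0 ξ with h | h
    · exact (tr_ineqs hp hMR h).2.2.2.1
    · have := (tr_ineqs hp hMR (neg_nonneg.2 h)).2.2.2.1
      rw [trD2_neg hM0, trS_neg] at this
      simpa using this
  · intro ξ
    rw [hd1, hd2]
    rcases le_total 0 ξ with h | h
    · exact (tr_ineqs hp hMR h).2.2.2.2
    · have := (tr_ineqs hp hMR (neg_nonneg.2 h)).2.2.2.2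
      rw [trD2_neg hM0, trS_neg] at this
      simpa using this
end
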